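/- Let H = (O, <_p) be a finite history over the snapshot-memory alphabet with n processes, where each operation is performed by a process π(·) < n, <_p relates only operations of the same process and totally orders the operations of each process, only process i performs the operations update(i, ·), and for every register k the values written by the successive updates of process k (in process order) are strictly increasing and positive. If H is sequentially consistent with respect to the snapshot-memory sequential specification T_snap, then for any two snapshot operations of H returning vectors A and B, either A k ≤ B k for all k < n, or B k ≤ A k for all k < n. -/

import Mathlib

/-!
STATEMENT 10: In a sequentially consistent snapshot memory in which each
process writes strictly increasing positive values, any two snapshots return
pointwise comparable vectors.
-/

/-- Operations of the snapshot memory over `n` registers. -/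
inductive SnapOp (n : ℕ) : Type
  | update (k : Fin n) (v : ℕ) : SnapOp n
  | snap (A : Fin n → ℕ) : SnapOp n

/-- `snapRun M w`: `w` is a correct snapshot-memory behaviour starting from
memory state `M` (every snapshot returns the current state). -/
def snapRun {n : ℕ} : (Fin n → ℕ) → List (SnapOp n) → Prop
  | _, [] => True
  | M, SnapOp.update k v :: l => snapRun (Function.update M k v) l
  | M, SnapOp.snap A :: l => A = M ∧ snapRun M l

/-- The snapshot-memory sequential specification over `n` registers
(all registers initialized to 0). -/
def TSnap (n : ℕ) : Set (List (SnapOp n)) := {w | snapRun (fun _ => 0) w}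

/-- The (sub-)history with operations `S ⊆ O`, process order `p` and labelling
`lab` is sequentially consistent with respect to the sequential specification
`T`: some enumeration `l` of `S` respecting `p` yields a word of `T`. -/
def SeqConsList {O L : Type} (S : Set O) (p : O → O → Prop) (lab : O → L)
    (T : Set (List L)) : Prop :=
  ∃ l : List O, l.Nodup ∧ (∀ o, o ∈ l ↔ o ∈ S) ∧
    (∀ a b, a ∈ S → b ∈ S → p a b → List.Sublist [a, b] l) ∧
    l.map lab ∈ T

/-- The memory state after executing a word. -/
def stateAfter {n : ℕ} : (Fin n → ℕ) → List (SnapOp n) → (Fin n → ℕ)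
  | M, [] => M
  | M, SnapOp.update k v :: l => stateAfter (Function.update M k v) l
  | M, SnapOp.snap _ :: l => stateAfter M l

lemma snapRun_append {n : ℕ} :
    ∀ (x : List (SnapOp n)) (y : List (SnapOp n)) (M : Fin n → ℕ),
      snapRun M (x ++ y) → snapRun (stateAfter M x) y
  | [], _, _, h => h
  | SnapOp.update k v :: l, y, M, h => snapRun_append l y _ h
  | SnapOp.snap A :: l, y, M, h => snapRun_append l y M h.2

lemma stateAfter_eq {n : ℕ} :
    ∀ (w : List (SnapOp n)) (M : Fin n → ℕ) (k : Fin n),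
      stateAfter M w k = M k ∨
        ∃ v, SnapOp.update k v ∈ w ∧ stateAfter M w k = v := by
  intro w
  induction w with
  | nil => intro M k; exact Or.inl rfl
  | cons op rest ih =>
    intro M k
    cases op with
    | update k' v =>
      rcases ih (Function.update M k' v) k with h | ⟨v', hv', he⟩
      · by_cases hk : k' = k
        · subst hk
          right
          exact ⟨v, List.mem_cons_self, by simpa [stateAfter] using h⟩
        · left
          show stateAfter (Function.update M k' v) rest k = M k
          rw [h, Function.update_of_ne (fun hkk => hk hkk.symm)]
      · right
        exact ⟨v', List.mem_cons_of_mem _ hv', he⟩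
    | snap A =>
      rcases ih M k with h | ⟨v', hv', he⟩
      · exact Or.inl h
      · exact Or.inr ⟨v', List.mem_cons_of_mem _ hv', he⟩

lemma pair_sublist_antisymm {α : Type*} {x y : α} :
    ∀ {l : List α}, l.Nodup → List.Sublist [x, y] l → List.Sublist [y, x] l → x = y := by
  intro l
  induction l with
  | nil => intro _ h _; simpa using List.eq_nil_of_sublist_nil h
  | cons c t ih =>
    intro hnd h1 h2
    have hct : c ∉ t := (List.nodup_cons.mp hnd).1
    cases h1 with
    | cons _ h1' =>
      cases h2 with
      | cons _ h2' => exact ih (List.nodup_cons.mp hnd).2 h1' h2'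
      | cons_cons h2' =>
        -- here c = y and [x,y] <+ t gives y ∈ t
        exact absurd (h1'.subset (by simp)) hct
    | cons_cons h1' =>
      cases h2 with
      | cons _ h2' =>
        exact absurd (h2'.subset (by simp)) hct
      | cons_cons h2' => rfl

lemma key_step {n : ℕ} {O : Type}
    (p : O → O → Prop) (π : O → Fin n) (lab : O → SnapOp n)
    (htotal : ∀ a b, π a = π b → a ≠ b → p a b ∨ p b a)
    (hown : ∀ o k v, lab o = SnapOp.update k v → π o = k)
    (hmono : ∀ u u' k v v', p u u' → lab u = SnapOp.update k v →
      lab u' = SnapOp.update k v' → v < v')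
    (l l1 m1 m2 : List O) (x y : O)
    (hl : l = l1 ++ x :: m1 ++ y :: m2)
    (hnd : l.Nodup)
    (hsub : ∀ a b, p a b → List.Sublist [a, b] l)
    (hrun : snapRun (fun _ => 0) (l.map lab))
    (A B : Fin n → ℕ) (hA : lab x = SnapOp.snap A) (hB : lab y = SnapOp.snap B) :
    ∀ k, A k ≤ B k := by
  subst hl
  have hmap : (l1 ++ x :: m1 ++ y :: m2).map lab
      = l1.map lab ++ (lab x :: (m1.map lab ++ lab y :: m2.map lab)) := by
    simp
  rw [hmap] at hrun
  have h1 := snapRun_append (l1.map lab) _ _ hrun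
  rw [hA] at h1
  obtain ⟨hAM, hrun2⟩ := h1
  have h2 := snapRun_append (m1.map lab) _ _ hrun2
  rw [hB] at h2
  have hBM : B = stateAfter (stateAfter (fun _ => 0) (l1.map lab)) (m1.map lab) :=
    h2.1
  intro k
  rcases stateAfter_eq (m1.map lab) (stateAfter (fun _ => 0) (l1.map lab)) k with
    h | ⟨v, hv, he⟩
  · rw [hBM, h, ← hAM]
  · -- B k = v, written by some o ∈ m1
    obtain ⟨o, ho, hlo⟩ := List.mem_map.mp hv
    have hBk : B k = v := by rw [hBM]; exact he
    rcases stateAfter_eq (l1.map lab) (fun _ => 0) k with h0 | ⟨v', hv', he'⟩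
    · have : A k = 0 := by rw [hAM]; exact h0
      rw [this]; exact Nat.zero_le _
    · obtain ⟨o', ho', hlo'⟩ := List.mem_map.mp hv'
      have hAk : A k = v' := by rw [hAM]; exact he'
      have hπ : π o' = π o := by
        rw [hown o' k v' hlo', hown o k v hlo]
      have hne : o' ≠ o := by
        intro hoo
        have hnd' : (l1 ++ (x :: (m1 ++ y :: m2))).Nodup := by
          simpa [List.append_assoc] using hnd
        have hdisj := (List.nodup_append'.mp hnd').2.2
        exact hdisj ho' (by
          rw [hoo]
          exact List.mem_cons_of_mem _ (List.mem_append_left _ ho))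
      rcases htotal o' o hπ hne with hpo | hpo
      · have := hmono o' o k v' v hpo hlo' hlo
        rw [hAk, hBk]; omega
      · exfalso
        have hsub1 : List.Sublist [o, o'] (l1 ++ x :: m1 ++ y :: m2) :=
          hsub o o' hpo
        have hsub2 : List.Sublist [o', o] (l1 ++ x :: m1 ++ y :: m2) := by
          have hs1 : List.Sublist [o'] l1 := List.singleton_sublist.mpr ho'
          have hs2 : List.Sublist [o] (x :: m1 ++ y :: m2) :=
            List.singleton_sublist.mpr (by
              exact List.mem_cons_of_mem _ (List.mem_append_left _ ho))
          simpa using hs1.append hs2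
        exact hne (pair_sublist_antisymm hnd hsub2 hsub1)

/-- Let `H` be a finite history over the snapshot-memory alphabet where `p`
(the process order, a strict partial order) relates only operations of the
same process `π`, totally orders the operations of each process, only process
`i` performs `update(i, ·)`, and for every register `k` the values written by
the successive updates of process `k` (in process order) are strictly
increasing and positive. If `H` is sequentially consistent w.r.t. `TSnap n`,
then the vectors returned by any two snapshots of `H` are pointwise
comparable. -/

theorem sc_snapshots_comparable {n : ℕ} {O : Type} [Fintype O]
    (p : O → O → Prop) (π : O → Fin n) (lab : O → SnapOp n)
    (hp_irrefl : ∀ a, ¬ p a a) (hp_trans : ∀ a b c, p a b → p b c → p a c)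
    (hproc : ∀ a b, p a b → π a = π b)
    (htotal : ∀ a b, π a = π b → a ≠ b → p a b ∨ p b a)
    (hown : ∀ o k v, lab o = SnapOp.update k v → π o = k)
    (hmono : ∀ u u' k v v', p u u' → lab u = SnapOp.update k v →
      lab u' = SnapOp.update k v' → v < v')
    (hpos : ∀ o k v, lab o = SnapOp.update k v → 0 < v)
    (hSC : SeqConsList Set.univ p lab (TSnap n))
    (a b : O) (A B : Fin n → ℕ)
    (hA : lab a = SnapOp.snap A) (hB : lab b = SnapOp.snap B) :
    (∀ k, A k ≤ B k) ∨ (∀ k, B k ≤ A k) := by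
  obtain ⟨l, hnd, hmem, hpord, hword⟩ := hSC
  have hsub : ∀ u v, p u v → List.Sublist [u, v] l := fun u v h =>
    hpord u v (Set.mem_univ u) (Set.mem_univ v) h
  have hrun : snapRun (fun _ => 0) (l.map lab) := hword
  by_cases hab : a = b
  · subst hab
    have : A = B := by
      have := hA.symm.trans hB
      exact (SnapOp.snap.injEq _ _).mp this
    subst this
    exact Or.inl (fun k => le_refl _)
  · have ha : a ∈ l := (hmem a).mpr (Set.mem_univ a)
    have hb : b ∈ l := (hmem b).mpr (Set.mem_univ b)
    obtain ⟨l1, l2, hl⟩ := List.append_of_mem ha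
    have hb' : b ∈ l1 ∨ b ∈ l2 := by
      rw [hl] at hb
      rcases List.mem_append.mp hb with h | h
      · exact Or.inl h
      · rcases List.mem_cons.mp h with h | h
        · exact absurd h.symm hab
        · exact Or.inr h
    rcases hb' with hbl | hbl
    · -- b before a
      obtain ⟨s, t, hst⟩ := List.append_of_mem hbl
      right
      refine key_step p π lab htotal hown hmono l s t l2 b a ?_ hnd hsub hrun B A hB hA
      rw [hl, hst]
      try simp
    · -- a before b
      obtain ⟨s, t, hst⟩ := List.append_of_mem hbl
      left
      refine key_step p π lab htotal hown hmono l l1 s t a b ?_ hnd hsub hrun A B hA hB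
      rw [hl, hst]
      try simp
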